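/- For every nonzero vector v ∈ ℝ³, the orbit G_cube·v = {A·v : A ∈ G_cube} has cardinality 6, 8, 12, or 24. -/

import Mathlib

open Matrix

/-- A 3×3 real matrix is a rotation if it is orthogonal with determinant 1. -/
def IsRotation (A : Matrix (Fin 3) (Fin 3) ℝ) : Prop := Aᵀ * A = 1 ∧ A.det = 1

/-- The action of a 3×3 matrix on ℝ³ by matrix–vector multiplication. -/
noncomputable def act (A : Matrix (Fin 3) (Fin 3) ℝ) (v : EuclideanSpace ℝ (Fin 3)) :
    EuclideanSpace ℝ (Fin 3) := WithLp.toLp 2 (A.mulVec v)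

/-- The orbit of a point under a set of matrices. -/
def orb (G : Set (Matrix (Fin 3) (Fin 3) ℝ)) (v : EuclideanSpace ℝ (Fin 3)) :
    Set (EuclideanSpace ℝ (Fin 3)) := {q | ∃ A ∈ G, act A v = q}

/-- The vertices (±1,±1,±1) of a cube. -/
noncomputable def Vcube : Set (EuclideanSpace ℝ (Fin 3)) :=
  {p | ∃ s₁ s₂ s₃ : ℝ, (s₁ = 1 ∨ s₁ = -1) ∧ (s₂ = 1 ∨ s₂ = -1) ∧ (s₃ = 1 ∨ s₃ = -1) ∧
    p = ![s₁, s₂, s₃]}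

/-- The octahedral rotation group: all rotations preserving the cube `Vcube` setwise. -/
noncomputable def Gcube : Set (Matrix (Fin 3) (Fin 3) ℝ) :=
  {A | IsRotation A ∧ act A '' Vcube = Vcube}

noncomputable def Q (σ : Equiv.Perm (Fin 3)) (s : Fin 3 → ℝ) : Matrix (Fin 3) (Fin 3) ℝ :=
  fun i j => if i = σ j then s j else 0
lemma Q_eq (σ : Equiv.Perm (Fin 3)) (s : Fin 3 → ℝ) :
    Q σ s = (σ⁻¹).permMatrix ℝ * Matrix.diagonal s := by
  ext i j
  simp [Q, Matrix.mul_apply, Equiv.Perm.permMatrix, PEquiv.toMatrix, Equiv.toPEquiv,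
    Matrix.diagonal, Finset.sum_ite_eq, eq_comm]
  have h : (i = σ j) ↔ (j = σ⁻¹ i) := by constructor <;> intro h <;> simp [h]
  rw [if_congr h rfl rfl]
  rfl

lemma det_Q (σ : Equiv.Perm (Fin 3)) (s : Fin 3 → ℝ) :
    (Q σ s).det = (Equiv.Perm.sign σ : ℝ) * (s 0 * s 1 * s 2) := by
  rw [Q_eq, Matrix.det_mul, Matrix.det_permutation, Matrix.det_diagonal]
  simp [Fin.prod_univ_three]

lemma mulVec_Q (σ : Equiv.Perm (Fin 3)) (s : Fin 3 → ℝ) (v : Fin 3 → ℝ) :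
    (Q σ s).mulVec v = fun i => s (σ.symm i) * v (σ.symm i) := by
  ext i
  simp only [Q, Matrix.mulVec, dotProduct]
  rw [Finset.sum_eq_single (σ.symm i)]
  · simp
  · intro b _ hb
    have : i ≠ σ b := fun h => hb (by simp [h])
    simp [this]
  · simp

/-- membership in Vcube -/
lemma mem_Vcube {p : EuclideanSpace ℝ (Fin 3)} :
    p ∈ Vcube ↔ ∀ i, p i = 1 ∨ p i = -1 := by
  constructor
  · rintro ⟨s₁, s₂, s₃, h₁, h₂, h₃, hp⟩ i
    rw [hp]
    fin_cases i <;> simpa using (by assumption)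
  · intro h
    exact ⟨p 0, p 1, p 2, h 0, h 1, h 2, by
      funext i; fin_cases i <;> rfl⟩

lemma QtQ (σ : Equiv.Perm (Fin 3)) (s : Fin 3 → ℝ) (hs : ∀ j, s j = 1 ∨ s j = -1) :
    (Q σ s)ᵀ * (Q σ s) = 1 := by
  ext i j
  simp only [Matrix.mul_apply, Matrix.transpose_apply, Q]
  have key : ∀ b : Fin 3, (if b = σ i then s i else 0) * (if b = σ j then s j else 0)
      = if b = σ i then (if σ i = σ j then s i * s j else 0) else 0 := by
    intro b
    by_cases h1 : b = σ i <;> by_cases h2 : b = σ j <;>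
      subst_eqs <;> simp_all
  rw [Finset.sum_congr rfl (fun b _ => key b), Finset.sum_ite_eq' Finset.univ (σ i)]
  simp only [Finset.mem_univ, if_true, σ.injective.eq_iff]
  rcases eq_or_ne i j with rfl | hij
  · rcases hs i with h | h <;> simp [h]
  · simp [hij, Matrix.one_apply_ne hij]

lemma Q_mem_Gcube (σ : Equiv.Perm (Fin 3)) (s : Fin 3 → ℝ) (hs : ∀ j, s j = 1 ∨ s j = -1)
    (hdet : (Q σ s).det = 1) : Q σ s ∈ Gcube := by
  refine ⟨⟨QtQ σ s hs, hdet⟩, ?_⟩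
  apply Set.eq_of_subset_of_subset
  · rintro q ⟨p, hp, rfl⟩
    rw [mem_Vcube] at hp ⊢
    intro i
    have : act (Q σ s) p = fun i => s (σ.symm i) * p (σ.symm i) := mulVec_Q σ s p
    rw [this]
    rcases hs (σ.symm i) with h | h <;> rcases hp (σ.symm i) with h' | h' <;>
      simp [h, h']
  · intro q hq
    rw [mem_Vcube] at hq
    refine ⟨WithLp.toLp 2 (fun j => s j * q (σ j)), ?_, ?_⟩
    · rw [mem_Vcube]
      intro i
      rcases hs i with h | h <;> rcases hq (σ i) with h' | h' <;> simp [h, h']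
    · show WithLp.toLp 2 ((Q σ s).mulVec _) = q
      rw [mulVec_Q]
      ext i
      rcases hs (σ.symm i) with h | h <;> simp [h, Equiv.apply_symm_apply] <;> rw [Equiv.apply_symm_apply]
lemma dot_pres {A : Matrix (Fin 3) (Fin 3) ℝ} (h : Aᵀ * A = 1) (x y : Fin 3 → ℝ) :
    A.mulVec x ⬝ᵥ A.mulVec y = x ⬝ᵥ y := by
  rw [Matrix.dotProduct_mulVec]
  have hx : A.vecMul (A.mulVec x) = x := by
    rw [← Matrix.mulVec_transpose, Matrix.mulVec_mulVec, h, Matrix.one_mulVec]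
  rw [hx]

lemma exists_Q_of_mem_Gcube {A : Matrix (Fin 3) (Fin 3) ℝ} (hA : A ∈ Gcube) :
    ∃ σ s, (∀ j, s j = 1 ∨ s j = -1) ∧ A = Q σ s := by
  obtain ⟨⟨horth, _⟩, himg⟩ := hA
  have hmap : ∀ p : EuclideanSpace ℝ (Fin 3), p ∈ Vcube → WithLp.toLp 2 (A.mulVec p) ∈ Vcube := by
    intro p hp
    rw [← himg]; exact ⟨p, hp, rfl⟩
  set u : Fin 3 → (Fin 3 → ℝ) := fun k j => if j = k then 1 else -1 with hu
  set u0 : Fin 3 → ℝ := fun _ => 1 with hu0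
  have hu0V : (WithLp.toLp 2 u0 : EuclideanSpace ℝ (Fin 3)) ∈ Vcube := mem_Vcube.2 (fun i => Or.inl rfl)
  have hukV : ∀ k, (WithLp.toLp 2 (u k) : EuclideanSpace ℝ (Fin 3)) ∈ Vcube := by
    intro k; rw [mem_Vcube]; intro i
    by_cases h : i = k <;> simp [hu, h]
  set w0 : Fin 3 → ℝ := A.mulVec u0 with hw0
  set w : Fin 3 → (Fin 3 → ℝ) := fun k => A.mulVec (u k) with hw
  have hw0s : ∀ i, w0 i = 1 ∨ w0 i = -1 := mem_Vcube.1 (hmap _ hu0V)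
  have hwks : ∀ k i, w k i = 1 ∨ w k i = -1 := fun k => mem_Vcube.1 (hmap _ (hukV k))
  -- the key column computation: 2 * A i k = w0 i + w k i
  have hcol2 : ∀ k i, 2 * A i k = w0 i + w k i := by
    intro k i
    have e0 : w0 i = A i 0 * 1 + A i 1 * 1 + A i 2 * 1 := by
      simp [hw0, hu0, Matrix.mulVec, dotProduct, Fin.sum_univ_three]
    have ek : w k i = A i 0 * u k 0 + A i 1 * u k 1 + A i 2 * u k 2 := by
      simp [hw, Matrix.mulVec, dotProduct, Fin.sum_univ_three]
    rw [e0, ek]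
    fin_cases k <;> simp [hu] <;> ring
  -- dot products
  have hdot : ∀ k, w0 ⬝ᵥ w k = -1 := by
    intro k
    have : w0 ⬝ᵥ w k = u0 ⬝ᵥ u k := dot_pres horth u0 (u k)
    rw [this]
    have : u0 ⬝ᵥ u k = u k 0 + u k 1 + u k 2 := by
      simp [dotProduct, Fin.sum_univ_three, hu0]
    rw [this]
    fin_cases k <;> simp [hu] <;> norm_num
  -- for each k there is a unique index jk where w0 and w k agree
  have hone : ∀ k, ∃ j : Fin 3, ∀ i, A i k = if i = j then w0 j else 0 := by
    intro k
    have hd : w0 0 * w k 0 + w0 1 * w k 1 + w0 2 * w k 2 = -1 := by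
      have := hdot k
      simpa [dotProduct, Fin.sum_univ_three] using this
    have key : ∀ i, (w0 i = w k i ∧ w0 i * w k i = 1) ∨ (w0 i = - w k i ∧ w0 i * w k i = -1) := by
      intro i
      rcases hw0s i with h1 | h1 <;> rcases hwks k i with h2 | h2 <;>
        simp [h1, h2] <;> norm_num
    have hAik : ∀ i, 2 * A i k = w0 i + w k i := hcol2 k
    rcases key 0 with ⟨e0, p0⟩ | ⟨e0, p0⟩ <;> rcases key 1 with ⟨e1, p1⟩ | ⟨e1, p1⟩ <;>
      rcases key 2 with ⟨e2, p2⟩ | ⟨e2, p2⟩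
    · exfalso; rw [p0, p1, p2] at hd; norm_num at hd
    · exfalso; rw [p0, p1, p2] at hd; norm_num at hd
    · exfalso; rw [p0, p1, p2] at hd; norm_num at hd
    · -- agree only at 0
      refine ⟨0, fun i => ?_⟩
      have h2 := hAik i
      fin_cases i <;> simp at h2 ⊢ <;> [skip; rw [e1] at h2; rw [e2] at h2] <;> linarith
    · exfalso; rw [p0, p1, p2] at hd; norm_num at hd
    · refine ⟨1, fun i => ?_⟩
      have h2 := hAik i
      fin_cases i <;> simp at h2 ⊢ <;> [rw [e0] at h2; skip; rw [e2] at h2] <;> linarith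
    · refine ⟨2, fun i => ?_⟩
      have h2 := hAik i
      fin_cases i <;> simp at h2 ⊢ <;> [rw [e0] at h2; rw [e1] at h2; skip] <;> linarith
    · exfalso; rw [p0, p1, p2] at hd; norm_num at hd
  choose g hg using hone
  -- injectivity of g
  have hinj : Function.Injective g := by
    intro k k' hkk'
    by_contra hne
    have horthcol : A 0 k * A 0 k' + A 1 k * A 1 k' + A 2 k * A 2 k' = 0 := by
      have := congrFun (congrFun horth k) k'
      have h1 : (1 : Matrix (Fin 3) (Fin 3) ℝ) k k' = 0 := Matrix.one_apply_ne hne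
      rw [h1] at this
      simpa [Matrix.mul_apply, Matrix.transpose_apply, Fin.sum_univ_three] using this
    rw [hg k 0, hg k 1, hg k 2, hg k' 0, hg k' 1, hg k' 2, hkk'] at horthcol
    rcases (by decide : ∀ m : Fin 3, m = 0 ∨ m = 1 ∨ m = 2) (g k') with hm | hm | hm <;>
      rw [hm] at horthcol <;> norm_num at horthcol <;>
      rcases hw0s (g k') with h | h <;> rw [hm] at h <;> rw [h] at horthcol <;> simp_all
  refine ⟨Equiv.ofBijective g (Finite.injective_iff_bijective.mp hinj),
    fun k => w0 (g k), fun k => hw0s (g k), ?_⟩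
  ext i k
  rw [hg k i]
  rfl


lemma Q_one : Q 1 (fun _ => (1:ℝ)) = 1 := by
  ext i j
  simp [Q, Matrix.one_apply, eq_comm]
  split_ifs <;> simp_all

lemma mem_Sv {v : EuclideanSpace ℝ (Fin 3)} {A : Matrix (Fin 3) (Fin 3) ℝ}
    (h : A ∈ Gcube ∧ A.mulVec v = v) :
    ∃ σ s, (∀ j, s j = 1 ∨ s j = -1) ∧ (Equiv.Perm.sign σ : ℝ) * (s 0 * s 1 * s 2) = 1 ∧
      (∀ j, s j * v j = v (σ j)) ∧ A = Q σ s := by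
  obtain ⟨hG, hfix⟩ := h
  obtain ⟨σ, s, hs, rfl⟩ := exists_Q_of_mem_Gcube hG
  refine ⟨σ, s, hs, ?_, ?_, rfl⟩
  · have := hG.1.2
    rwa [det_Q] at this
  · intro j
    have e : (Equiv.symm σ) (σ j) = j := σ.symm_apply_apply j
    have h2 : s (σ.symm (σ j)) * v (σ.symm (σ j)) = v (σ j) := by
      have := congrFun hfix (σ j)
      rw [mulVec_Q] at this
      simpa using this
    rwa [e] at h2

lemma perm3_cases (σ : Equiv.Perm (Fin 3)) :
    σ = 1 ∨ σ = Equiv.swap (0:Fin 3) 1 ∨ σ = Equiv.swap (0:Fin 3) 2 ∨ σ = Equiv.swap (1:Fin 3) 2 ∨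
      σ = finRotate 3 ∨ σ = (finRotate 3)⁻¹ := by revert σ; decide


lemma tri : ∀ m : Fin 3, m = 0 ∨ m = 1 ∨ m = 2 := by decide

lemma smc {x y : ℝ} (hy : y ≠ 0) (h : x * y = y) : x = 1 :=
  mul_right_cancel₀ hy (by rw [h, one_mul])

lemma spair {sa sb va vb : ℝ} (hva : va ≠ 0) (hvb : vb ≠ 0)
    (fa : sa * va = vb) (fb : sb * vb = va) : sa * sb = 1 :=
  mul_right_cancel₀ (mul_ne_zero hva hvb)
    (by linear_combination (sb * vb) * fa + vb * fb)

lemma skill {s vj : ℝ} (hs : s = 1 ∨ s = -1) (hnz : vj ≠ 0) (h : s * vj = 0) : False := by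
  rcases hs with h'|h' <;> rw [h'] at h <;> exact hnz (by linarith)

lemma ncard_le_four {α : Type*} (a b c d : α) : ({a,b,c,d} : Set α).ncard ≤ 4 := by
  have h2 : ({c,d} : Set α).ncard ≤ 2 := by
    refine le_trans (Set.ncard_insert_le _ _) ?_
    simp [Set.ncard_singleton]
  have h3 : ({b,c,d} : Set α).ncard ≤ 3 := le_trans (Set.ncard_insert_le _ _) (by omega)
  exact le_trans (Set.ncard_insert_le _ _) (by omega)

lemma ncard3_le_four {α : Type*} (a b c : α) : ({a,b,c} : Set α).ncard ≤ 4 := by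
  have h2 : ({b,c} : Set α).ncard ≤ 2 := by
    refine le_trans (Set.ncard_insert_le _ _) ?_
    simp [Set.ncard_singleton]
  exact le_trans (Set.ncard_insert_le _ _) (by omega)

lemma Sv_ncard_le (v : EuclideanSpace ℝ (Fin 3)) (hv : v ≠ 0) :
    {A : Matrix (Fin 3) (Fin 3) ℝ | A ∈ Gcube ∧ A.mulVec v = v}.ncard ≤ 4 := by
  by_cases h0 : v 0 = 0 <;> by_cases h1 : v 1 = 0 <;> by_cases h2 : v 2 = 0
  · exact absurd (by ext i; obtain rfl|rfl|rfl := tri i <;> assumption) hv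
  · have hsub : {A : Matrix (Fin 3) (Fin 3) ℝ | A ∈ Gcube ∧ A.mulVec v = v} ⊆
        ({1, Q (1 : Equiv.Perm (Fin 3)) ![-1,-1,1], Q (Equiv.swap (0:Fin 3) 1) ![1,-1,1], Q (Equiv.swap (0:Fin 3) 1) ![-1,1,1]} : Set (Matrix (Fin 3) (Fin 3) ℝ)) := by
      intro A hA
      obtain ⟨σ, s, hs, hdet, hfix, rfl⟩ := mem_Sv hA
      rcases perm3_cases σ with rfl|rfl|rfl|rfl|rfl|rfl
      have f2 : s 2 * v 2 = v 2 := by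
        have h := hfix 2
        rwa [(by decide : ((1 : Equiv.Perm (Fin 3))) 2 = 2)] at h
      have hs2 : s 2 = 1 := smc h2 f2
      rw [(by decide : Equiv.Perm.sign ((1 : Equiv.Perm (Fin 3))) = 1)] at hdet
      push_cast at hdet
      have hd : s 0 * s 1 * s 2 = 1 := by linarith
      rcases hs 0 with g1|g1 <;> rcases hs 1 with g2|g2
      · have hseq : s = fun _ => (1:ℝ) := by
          funext i; obtain rfl|rfl|rfl := tri i <;> simp [hs2, g1, g2]
        rw [hseq, Q_one]
        exact Set.mem_insert _ _
      · rw [hs2, g1, g2] at hd; norm_num at hd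
      · rw [hs2, g1, g2] at hd; norm_num at hd
      · have hseq : s = (![-1,-1,1] : Fin 3 → ℝ) := by
          funext i; obtain rfl|rfl|rfl := tri i <;> simp [hs2, g1, g2]
        rw [hseq]
        simp
      have f2 : s 2 * v 2 = v 2 := by
        have h := hfix 2
        rwa [(by decide : (Equiv.swap (0:Fin 3) 1) 2 = 2)] at h
      have hs2 : s 2 = 1 := smc h2 f2
      rw [(by decide : Equiv.Perm.sign (Equiv.swap (0:Fin 3) 1) = -1)] at hdet
      push_cast at hdet
      have hd : s 0 * s 1 * s 2 = -1 := by linarith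
      rcases hs 0 with g1|g1 <;> rcases hs 1 with g2|g2
      · rw [hs2, g1, g2] at hd; norm_num at hd
      · have hseq : s = (![1,-1,1] : Fin 3 → ℝ) := by
          funext i; obtain rfl|rfl|rfl := tri i <;> simp [hs2, g1, g2]
        rw [hseq]
        simp
      · have hseq : s = (![-1,1,1] : Fin 3 → ℝ) := by
          funext i; obtain rfl|rfl|rfl := tri i <;> simp [hs2, g1, g2]
        rw [hseq]
        simp
      · rw [hs2, g1, g2] at hd; norm_num at hd
      have f2 : s 2 * v 2 = v 0 := by
        have h := hfix 2
        rwa [(by decide : (Equiv.swap (0:Fin 3) 2) 2 = 0)] at h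
      rw [h0] at f2
      exact (skill (hs 2) h2 f2).elim
      have f2 : s 2 * v 2 = v 1 := by
        have h := hfix 2
        rwa [(by decide : (Equiv.swap (1:Fin 3) 2) 2 = 1)] at h
      rw [h1] at f2
      exact (skill (hs 2) h2 f2).elim
      have f2 : s 2 * v 2 = v 0 := by
        have h := hfix 2
        rwa [(by decide : (finRotate 3) 2 = 0)] at h
      rw [h0] at f2
      exact (skill (hs 2) h2 f2).elim
      have f2 : s 2 * v 2 = v 1 := by
        have h := hfix 2
        rwa [(by decide : ((finRotate 3)⁻¹) 2 = 1)] at h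
      rw [h1] at f2
      exact (skill (hs 2) h2 f2).elim
    exact le_trans (Set.ncard_le_ncard hsub (Set.toFinite _)) (ncard_le_four _ _ _ _)
  · have hsub : {A : Matrix (Fin 3) (Fin 3) ℝ | A ∈ Gcube ∧ A.mulVec v = v} ⊆
        ({1, Q (1 : Equiv.Perm (Fin 3)) ![-1,1,-1], Q (Equiv.swap (0:Fin 3) 2) ![1,1,-1], Q (Equiv.swap (0:Fin 3) 2) ![-1,1,1]} : Set (Matrix (Fin 3) (Fin 3) ℝ)) := by
      intro A hA
      obtain ⟨σ, s, hs, hdet, hfix, rfl⟩ := mem_Sv hA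
      rcases perm3_cases σ with rfl|rfl|rfl|rfl|rfl|rfl
      have f1 : s 1 * v 1 = v 1 := by
        have h := hfix 1
        rwa [(by decide : ((1 : Equiv.Perm (Fin 3))) 1 = 1)] at h
      have hs1 : s 1 = 1 := smc h1 f1
      rw [(by decide : Equiv.Perm.sign ((1 : Equiv.Perm (Fin 3))) = 1)] at hdet
      push_cast at hdet
      have hd : s 0 * s 1 * s 2 = 1 := by linarith
      rcases hs 0 with g1|g1 <;> rcases hs 2 with g2|g2
      · have hseq : s = fun _ => (1:ℝ) := by
          funext i; obtain rfl|rfl|rfl := tri i <;> simp [hs1, g1, g2]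
        rw [hseq, Q_one]
        exact Set.mem_insert _ _
      · rw [hs1, g1, g2] at hd; norm_num at hd
      · rw [hs1, g1, g2] at hd; norm_num at hd
      · have hseq : s = (![-1,1,-1] : Fin 3 → ℝ) := by
          funext i; obtain rfl|rfl|rfl := tri i <;> simp [hs1, g1, g2]
        rw [hseq]
        simp
      have f1 : s 1 * v 1 = v 0 := by
        have h := hfix 1
        rwa [(by decide : (Equiv.swap (0:Fin 3) 1) 1 = 0)] at h
      rw [h0] at f1
      exact (skill (hs 1) h1 f1).elim
      have f1 : s 1 * v 1 = v 1 := by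
        have h := hfix 1
        rwa [(by decide : (Equiv.swap (0:Fin 3) 2) 1 = 1)] at h
      have hs1 : s 1 = 1 := smc h1 f1
      rw [(by decide : Equiv.Perm.sign (Equiv.swap (0:Fin 3) 2) = -1)] at hdet
      push_cast at hdet
      have hd : s 0 * s 1 * s 2 = -1 := by linarith
      rcases hs 0 with g1|g1 <;> rcases hs 2 with g2|g2
      · rw [hs1, g1, g2] at hd; norm_num at hd
      · have hseq : s = (![1,1,-1] : Fin 3 → ℝ) := by
          funext i; obtain rfl|rfl|rfl := tri i <;> simp [hs1, g1, g2]
        rw [hseq]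
        simp
      · have hseq : s = (![-1,1,1] : Fin 3 → ℝ) := by
          funext i; obtain rfl|rfl|rfl := tri i <;> simp [hs1, g1, g2]
        rw [hseq]
        simp
      · rw [hs1, g1, g2] at hd; norm_num at hd
      have f1 : s 1 * v 1 = v 2 := by
        have h := hfix 1
        rwa [(by decide : (Equiv.swap (1:Fin 3) 2) 1 = 2)] at h
      rw [h2] at f1
      exact (skill (hs 1) h1 f1).elim
      have f1 : s 1 * v 1 = v 2 := by
        have h := hfix 1
        rwa [(by decide : (finRotate 3) 1 = 2)] at h
      rw [h2] at f1
      exact (skill (hs 1) h1 f1).elim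
      have f1 : s 1 * v 1 = v 0 := by
        have h := hfix 1
        rwa [(by decide : ((finRotate 3)⁻¹) 1 = 0)] at h
      rw [h0] at f1
      exact (skill (hs 1) h1 f1).elim
    exact le_trans (Set.ncard_le_ncard hsub (Set.toFinite _)) (ncard_le_four _ _ _ _)
  · have hsub : {A : Matrix (Fin 3) (Fin 3) ℝ | A ∈ Gcube ∧ A.mulVec v = v} ⊆
        ({1, Q (Equiv.swap (1:Fin 3) 2) ![-1,1,1], Q (Equiv.swap (1:Fin 3) 2) ![-1,-1,-1]} : Set (Matrix (Fin 3) (Fin 3) ℝ)) := by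
      intro A hA
      obtain ⟨σ, s, hs, hdet, hfix, rfl⟩ := mem_Sv hA
      rcases perm3_cases σ with rfl|rfl|rfl|rfl|rfl|rfl
      have f1 : s 1 * v 1 = v 1 := by
        have h := hfix 1
        rwa [(by decide : ((1 : Equiv.Perm (Fin 3))) 1 = 1)] at h
      have f2 : s 2 * v 2 = v 2 := by
        have h := hfix 2
        rwa [(by decide : ((1 : Equiv.Perm (Fin 3))) 2 = 2)] at h
      have hs1 : s 1 = 1 := smc h1 f1
      have hs2 : s 2 = 1 := smc h2 f2
      rw [(by decide : Equiv.Perm.sign ((1 : Equiv.Perm (Fin 3))) = 1)] at hdet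
      push_cast at hdet
      have hd : s 0 * s 1 * s 2 = 1 := by linarith
      rw [hs1, hs2] at hd
      norm_num at hd
      have hseq : s = fun _ => (1:ℝ) := by
        funext i; obtain rfl|rfl|rfl := tri i <;> simp [hs1, hs2, hd]
      rw [hseq, Q_one]
      exact Set.mem_insert _ _
      have f1 : s 1 * v 1 = v 0 := by
        have h := hfix 1
        rwa [(by decide : (Equiv.swap (0:Fin 3) 1) 1 = 0)] at h
      rw [h0] at f1
      exact (skill (hs 1) h1 f1).elim
      have f2 : s 2 * v 2 = v 0 := by
        have h := hfix 2
        rwa [(by decide : (Equiv.swap (0:Fin 3) 2) 2 = 0)] at h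
      rw [h0] at f2
      exact (skill (hs 2) h2 f2).elim
      have f1 : s 1 * v 1 = v 2 := by
        have h := hfix 1
        rwa [(by decide : (Equiv.swap (1:Fin 3) 2) 1 = 2)] at h
      have f2 : s 2 * v 2 = v 1 := by
        have h := hfix 2
        rwa [(by decide : (Equiv.swap (1:Fin 3) 2) 2 = 1)] at h
      have hpair : s 1 * s 2 = 1 := spair h1 h2 f1 f2
      rw [(by decide : Equiv.Perm.sign (Equiv.swap (1:Fin 3) 2) = -1)] at hdet
      push_cast at hdet
      have hd : s 0 * s 1 * s 2 = -1 := by linarith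
      have h' : (s 1 * s 2) * s 0 = -1 := by linear_combination hd
      rw [hpair, one_mul] at h'
      rcases hs 1 with g1|g1
      · have g2 : s 2 = 1 := by rw [g1, one_mul] at hpair; exact hpair
        have hseq : s = (![-1,1,1] : Fin 3 → ℝ) := by
          funext i; obtain rfl|rfl|rfl := tri i <;> simp [h', g1, g2]
        rw [hseq]
        simp
      · have g2 : s 2 = -1 := by rw [g1] at hpair; linarith
        have hseq : s = (![-1,-1,-1] : Fin 3 → ℝ) := by
          funext i; obtain rfl|rfl|rfl := tri i <;> simp [h', g1, g2]
        rw [hseq]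
        simp
      have f2 : s 2 * v 2 = v 0 := by
        have h := hfix 2
        rwa [(by decide : (finRotate 3) 2 = 0)] at h
      rw [h0] at f2
      exact (skill (hs 2) h2 f2).elim
      have f1 : s 1 * v 1 = v 0 := by
        have h := hfix 1
        rwa [(by decide : ((finRotate 3)⁻¹) 1 = 0)] at h
      rw [h0] at f1
      exact (skill (hs 1) h1 f1).elim
    exact le_trans (Set.ncard_le_ncard hsub (Set.toFinite _)) (ncard3_le_four _ _ _)
  · have hsub : {A : Matrix (Fin 3) (Fin 3) ℝ | A ∈ Gcube ∧ A.mulVec v = v} ⊆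
        ({1, Q (1 : Equiv.Perm (Fin 3)) ![1,-1,-1], Q (Equiv.swap (1:Fin 3) 2) ![1,1,-1], Q (Equiv.swap (1:Fin 3) 2) ![1,-1,1]} : Set (Matrix (Fin 3) (Fin 3) ℝ)) := by
      intro A hA
      obtain ⟨σ, s, hs, hdet, hfix, rfl⟩ := mem_Sv hA
      rcases perm3_cases σ with rfl|rfl|rfl|rfl|rfl|rfl
      have f0 : s 0 * v 0 = v 0 := by
        have h := hfix 0
        rwa [(by decide : ((1 : Equiv.Perm (Fin 3))) 0 = 0)] at h
      have hs0 : s 0 = 1 := smc h0 f0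
      rw [(by decide : Equiv.Perm.sign ((1 : Equiv.Perm (Fin 3))) = 1)] at hdet
      push_cast at hdet
      have hd : s 0 * s 1 * s 2 = 1 := by linarith
      rcases hs 1 with g1|g1 <;> rcases hs 2 with g2|g2
      · have hseq : s = fun _ => (1:ℝ) := by
          funext i; obtain rfl|rfl|rfl := tri i <;> simp [hs0, g1, g2]
        rw [hseq, Q_one]
        exact Set.mem_insert _ _
      · rw [hs0, g1, g2] at hd; norm_num at hd
      · rw [hs0, g1, g2] at hd; norm_num at hd
      · have hseq : s = (![1,-1,-1] : Fin 3 → ℝ) := by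
          funext i; obtain rfl|rfl|rfl := tri i <;> simp [hs0, g1, g2]
        rw [hseq]
        simp
      have f0 : s 0 * v 0 = v 1 := by
        have h := hfix 0
        rwa [(by decide : (Equiv.swap (0:Fin 3) 1) 0 = 1)] at h
      rw [h1] at f0
      exact (skill (hs 0) h0 f0).elim
      have f0 : s 0 * v 0 = v 2 := by
        have h := hfix 0
        rwa [(by decide : (Equiv.swap (0:Fin 3) 2) 0 = 2)] at h
      rw [h2] at f0
      exact (skill (hs 0) h0 f0).elim
      have f0 : s 0 * v 0 = v 0 := by
        have h := hfix 0
        rwa [(by decide : (Equiv.swap (1:Fin 3) 2) 0 = 0)] at h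
      have hs0 : s 0 = 1 := smc h0 f0
      rw [(by decide : Equiv.Perm.sign (Equiv.swap (1:Fin 3) 2) = -1)] at hdet
      push_cast at hdet
      have hd : s 0 * s 1 * s 2 = -1 := by linarith
      rcases hs 1 with g1|g1 <;> rcases hs 2 with g2|g2
      · rw [hs0, g1, g2] at hd; norm_num at hd
      · have hseq : s = (![1,1,-1] : Fin 3 → ℝ) := by
          funext i; obtain rfl|rfl|rfl := tri i <;> simp [hs0, g1, g2]
        rw [hseq]
        simp
      · have hseq : s = (![1,-1,1] : Fin 3 → ℝ) := by
          funext i; obtain rfl|rfl|rfl := tri i <;> simp [hs0, g1, g2]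
        rw [hseq]
        simp
      · rw [hs0, g1, g2] at hd; norm_num at hd
      have f0 : s 0 * v 0 = v 1 := by
        have h := hfix 0
        rwa [(by decide : (finRotate 3) 0 = 1)] at h
      rw [h1] at f0
      exact (skill (hs 0) h0 f0).elim
      have f0 : s 0 * v 0 = v 2 := by
        have h := hfix 0
        rwa [(by decide : ((finRotate 3)⁻¹) 0 = 2)] at h
      rw [h2] at f0
      exact (skill (hs 0) h0 f0).elim
    exact le_trans (Set.ncard_le_ncard hsub (Set.toFinite _)) (ncard_le_four _ _ _ _)
  · have hsub : {A : Matrix (Fin 3) (Fin 3) ℝ | A ∈ Gcube ∧ A.mulVec v = v} ⊆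
        ({1, Q (Equiv.swap (0:Fin 3) 2) ![1,-1,1], Q (Equiv.swap (0:Fin 3) 2) ![-1,-1,-1]} : Set (Matrix (Fin 3) (Fin 3) ℝ)) := by
      intro A hA
      obtain ⟨σ, s, hs, hdet, hfix, rfl⟩ := mem_Sv hA
      rcases perm3_cases σ with rfl|rfl|rfl|rfl|rfl|rfl
      have f0 : s 0 * v 0 = v 0 := by
        have h := hfix 0
        rwa [(by decide : ((1 : Equiv.Perm (Fin 3))) 0 = 0)] at h
      have f2 : s 2 * v 2 = v 2 := by
        have h := hfix 2
        rwa [(by decide : ((1 : Equiv.Perm (Fin 3))) 2 = 2)] at h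
      have hs0 : s 0 = 1 := smc h0 f0
      have hs2 : s 2 = 1 := smc h2 f2
      rw [(by decide : Equiv.Perm.sign ((1 : Equiv.Perm (Fin 3))) = 1)] at hdet
      push_cast at hdet
      have hd : s 0 * s 1 * s 2 = 1 := by linarith
      rw [hs0, hs2] at hd
      norm_num at hd
      have hseq : s = fun _ => (1:ℝ) := by
        funext i; obtain rfl|rfl|rfl := tri i <;> simp [hs0, hs2, hd]
      rw [hseq, Q_one]
      exact Set.mem_insert _ _
      have f0 : s 0 * v 0 = v 1 := by
        have h := hfix 0
        rwa [(by decide : (Equiv.swap (0:Fin 3) 1) 0 = 1)] at h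
      rw [h1] at f0
      exact (skill (hs 0) h0 f0).elim
      have f0 : s 0 * v 0 = v 2 := by
        have h := hfix 0
        rwa [(by decide : (Equiv.swap (0:Fin 3) 2) 0 = 2)] at h
      have f2 : s 2 * v 2 = v 0 := by
        have h := hfix 2
        rwa [(by decide : (Equiv.swap (0:Fin 3) 2) 2 = 0)] at h
      have hpair : s 0 * s 2 = 1 := spair h0 h2 f0 f2
      rw [(by decide : Equiv.Perm.sign (Equiv.swap (0:Fin 3) 2) = -1)] at hdet
      push_cast at hdet
      have hd : s 0 * s 1 * s 2 = -1 := by linarith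
      have h' : (s 0 * s 2) * s 1 = -1 := by linear_combination hd
      rw [hpair, one_mul] at h'
      rcases hs 0 with g1|g1
      · have g2 : s 2 = 1 := by rw [g1, one_mul] at hpair; exact hpair
        have hseq : s = (![1,-1,1] : Fin 3 → ℝ) := by
          funext i; obtain rfl|rfl|rfl := tri i <;> simp [h', g1, g2]
        rw [hseq]
        simp
      · have g2 : s 2 = -1 := by rw [g1] at hpair; linarith
        have hseq : s = (![-1,-1,-1] : Fin 3 → ℝ) := by
          funext i; obtain rfl|rfl|rfl := tri i <;> simp [h', g1, g2]
        rw [hseq]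
        simp
      have f2 : s 2 * v 2 = v 1 := by
        have h := hfix 2
        rwa [(by decide : (Equiv.swap (1:Fin 3) 2) 2 = 1)] at h
      rw [h1] at f2
      exact (skill (hs 2) h2 f2).elim
      have f0 : s 0 * v 0 = v 1 := by
        have h := hfix 0
        rwa [(by decide : (finRotate 3) 0 = 1)] at h
      rw [h1] at f0
      exact (skill (hs 0) h0 f0).elim
      have f2 : s 2 * v 2 = v 1 := by
        have h := hfix 2
        rwa [(by decide : ((finRotate 3)⁻¹) 2 = 1)] at h
      rw [h1] at f2
      exact (skill (hs 2) h2 f2).elim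
    exact le_trans (Set.ncard_le_ncard hsub (Set.toFinite _)) (ncard3_le_four _ _ _)
  · have hsub : {A : Matrix (Fin 3) (Fin 3) ℝ | A ∈ Gcube ∧ A.mulVec v = v} ⊆
        ({1, Q (Equiv.swap (0:Fin 3) 1) ![1,1,-1], Q (Equiv.swap (0:Fin 3) 1) ![-1,-1,-1]} : Set (Matrix (Fin 3) (Fin 3) ℝ)) := by
      intro A hA
      obtain ⟨σ, s, hs, hdet, hfix, rfl⟩ := mem_Sv hA
      rcases perm3_cases σ with rfl|rfl|rfl|rfl|rfl|rfl
      have f0 : s 0 * v 0 = v 0 := by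
        have h := hfix 0
        rwa [(by decide : ((1 : Equiv.Perm (Fin 3))) 0 = 0)] at h
      have f1 : s 1 * v 1 = v 1 := by
        have h := hfix 1
        rwa [(by decide : ((1 : Equiv.Perm (Fin 3))) 1 = 1)] at h
      have hs0 : s 0 = 1 := smc h0 f0
      have hs1 : s 1 = 1 := smc h1 f1
      rw [(by decide : Equiv.Perm.sign ((1 : Equiv.Perm (Fin 3))) = 1)] at hdet
      push_cast at hdet
      have hd : s 0 * s 1 * s 2 = 1 := by linarith
      rw [hs0, hs1] at hd
      norm_num at hd
      have hseq : s = fun _ => (1:ℝ) := by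
        funext i; obtain rfl|rfl|rfl := tri i <;> simp [hs0, hs1, hd]
      rw [hseq, Q_one]
      exact Set.mem_insert _ _
      have f0 : s 0 * v 0 = v 1 := by
        have h := hfix 0
        rwa [(by decide : (Equiv.swap (0:Fin 3) 1) 0 = 1)] at h
      have f1 : s 1 * v 1 = v 0 := by
        have h := hfix 1
        rwa [(by decide : (Equiv.swap (0:Fin 3) 1) 1 = 0)] at h
      have hpair : s 0 * s 1 = 1 := spair h0 h1 f0 f1
      rw [(by decide : Equiv.Perm.sign (Equiv.swap (0:Fin 3) 1) = -1)] at hdet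
      push_cast at hdet
      have hd : s 0 * s 1 * s 2 = -1 := by linarith
      have h' : (s 0 * s 1) * s 2 = -1 := by linear_combination hd
      rw [hpair, one_mul] at h'
      rcases hs 0 with g1|g1
      · have g2 : s 1 = 1 := by rw [g1, one_mul] at hpair; exact hpair
        have hseq : s = (![1,1,-1] : Fin 3 → ℝ) := by
          funext i; obtain rfl|rfl|rfl := tri i <;> simp [h', g1, g2]
        rw [hseq]
        simp
      · have g2 : s 1 = -1 := by rw [g1] at hpair; linarith
        have hseq : s = (![-1,-1,-1] : Fin 3 → ℝ) := by
          funext i; obtain rfl|rfl|rfl := tri i <;> simp [h', g1, g2]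
        rw [hseq]
        simp
      have f0 : s 0 * v 0 = v 2 := by
        have h := hfix 0
        rwa [(by decide : (Equiv.swap (0:Fin 3) 2) 0 = 2)] at h
      rw [h2] at f0
      exact (skill (hs 0) h0 f0).elim
      have f1 : s 1 * v 1 = v 2 := by
        have h := hfix 1
        rwa [(by decide : (Equiv.swap (1:Fin 3) 2) 1 = 2)] at h
      rw [h2] at f1
      exact (skill (hs 1) h1 f1).elim
      have f1 : s 1 * v 1 = v 2 := by
        have h := hfix 1
        rwa [(by decide : (finRotate 3) 1 = 2)] at h
      rw [h2] at f1
      exact (skill (hs 1) h1 f1).elim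
      have f0 : s 0 * v 0 = v 2 := by
        have h := hfix 0
        rwa [(by decide : ((finRotate 3)⁻¹) 0 = 2)] at h
      rw [h2] at f0
      exact (skill (hs 0) h0 f0).elim
    exact le_trans (Set.ncard_le_ncard hsub (Set.toFinite _)) (ncard3_le_four _ _ _)
  · have hsub : {A : Matrix (Fin 3) (Fin 3) ℝ | A ∈ Gcube ∧ A.mulVec v = v} ⊆
        ({1, Q (finRotate 3) ![v 1 * (v 0)⁻¹, v 2 * (v 1)⁻¹, v 0 * (v 2)⁻¹], Q ((finRotate 3)⁻¹) ![v 2 * (v 0)⁻¹, v 0 * (v 1)⁻¹, v 1 * (v 2)⁻¹]} : Set (Matrix (Fin 3) (Fin 3) ℝ)) := by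
      intro A hA
      obtain ⟨σ, s, hs, hdet, hfix, rfl⟩ := mem_Sv hA
      rcases perm3_cases σ with rfl|rfl|rfl|rfl|rfl|rfl
      have f0 : s 0 * v 0 = v 0 := by
        have h := hfix 0
        rwa [(by decide : ((1 : Equiv.Perm (Fin 3))) 0 = 0)] at h
      have f1 : s 1 * v 1 = v 1 := by
        have h := hfix 1
        rwa [(by decide : ((1 : Equiv.Perm (Fin 3))) 1 = 1)] at h
      have f2 : s 2 * v 2 = v 2 := by
        have h := hfix 2
        rwa [(by decide : ((1 : Equiv.Perm (Fin 3))) 2 = 2)] at h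
      have hs0 : s 0 = 1 := smc h0 f0
      have hs1 : s 1 = 1 := smc h1 f1
      have hs2 : s 2 = 1 := smc h2 f2
      have hseq : s = fun _ => (1:ℝ) := by
        funext i; obtain rfl|rfl|rfl := tri i <;> simp [hs0, hs1, hs2]
      rw [hseq, Q_one]
      exact Set.mem_insert _ _
      have f0 : s 0 * v 0 = v 1 := by
        have h := hfix 0
        rwa [(by decide : (Equiv.swap (0:Fin 3) 1) 0 = 1)] at h
      have f1 : s 1 * v 1 = v 0 := by
        have h := hfix 1
        rwa [(by decide : (Equiv.swap (0:Fin 3) 1) 1 = 0)] at h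
      have f2 : s 2 * v 2 = v 2 := by
        have h := hfix 2
        rwa [(by decide : (Equiv.swap (0:Fin 3) 1) 2 = 2)] at h
      have hpair : s 0 * s 1 = 1 := spair h0 h1 f0 f1
      have hsc : s 2 = 1 := smc h2 f2
      rw [(by decide : Equiv.Perm.sign (Equiv.swap (0:Fin 3) 1) = -1)] at hdet
      push_cast at hdet
      have hd : s 0 * s 1 * s 2 = -1 := by linarith
      have h' : (s 0 * s 1) * s 2 = -1 := by linear_combination hd
      rw [hpair, hsc] at h'
      norm_num at h'
      have f0 : s 0 * v 0 = v 2 := by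
        have h := hfix 0
        rwa [(by decide : (Equiv.swap (0:Fin 3) 2) 0 = 2)] at h
      have f2 : s 2 * v 2 = v 0 := by
        have h := hfix 2
        rwa [(by decide : (Equiv.swap (0:Fin 3) 2) 2 = 0)] at h
      have f1 : s 1 * v 1 = v 1 := by
        have h := hfix 1
        rwa [(by decide : (Equiv.swap (0:Fin 3) 2) 1 = 1)] at h
      have hpair : s 0 * s 2 = 1 := spair h0 h2 f0 f2
      have hsc : s 1 = 1 := smc h1 f1
      rw [(by decide : Equiv.Perm.sign (Equiv.swap (0:Fin 3) 2) = -1)] at hdet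
      push_cast at hdet
      have hd : s 0 * s 1 * s 2 = -1 := by linarith
      have h' : (s 0 * s 2) * s 1 = -1 := by linear_combination hd
      rw [hpair, hsc] at h'
      norm_num at h'
      have f1 : s 1 * v 1 = v 2 := by
        have h := hfix 1
        rwa [(by decide : (Equiv.swap (1:Fin 3) 2) 1 = 2)] at h
      have f2 : s 2 * v 2 = v 1 := by
        have h := hfix 2
        rwa [(by decide : (Equiv.swap (1:Fin 3) 2) 2 = 1)] at h
      have f0 : s 0 * v 0 = v 0 := by
        have h := hfix 0
        rwa [(by decide : (Equiv.swap (1:Fin 3) 2) 0 = 0)] at h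
      have hpair : s 1 * s 2 = 1 := spair h1 h2 f1 f2
      have hsc : s 0 = 1 := smc h0 f0
      rw [(by decide : Equiv.Perm.sign (Equiv.swap (1:Fin 3) 2) = -1)] at hdet
      push_cast at hdet
      have hd : s 0 * s 1 * s 2 = -1 := by linarith
      have h' : (s 1 * s 2) * s 0 = -1 := by linear_combination hd
      rw [hpair, hsc] at h'
      norm_num at h'
      have f0 : s 0 * v 0 = v 1 := by
        have h := hfix 0
        rwa [(by decide : (finRotate 3) 0 = 1)] at h
      have f1 : s 1 * v 1 = v 2 := by
        have h := hfix 1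
        rwa [(by decide : (finRotate 3) 1 = 2)] at h
      have f2 : s 2 * v 2 = v 0 := by
        have h := hfix 2
        rwa [(by decide : (finRotate 3) 2 = 0)] at h
      have hseq : s = (![v 1 * (v 0)⁻¹, v 2 * (v 1)⁻¹, v 0 * (v 2)⁻¹] : Fin 3 → ℝ) := by
        funext i
        obtain rfl|rfl|rfl := tri i <;> simp <;> field_simp <;>
          linarith [f0, f1, f2]
      rw [hseq]
      simp
      have f0 : s 0 * v 0 = v 2 := by
        have h := hfix 0
        rwa [(by decide : ((finRotate 3)⁻¹) 0 = 2)] at h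
      have f1 : s 1 * v 1 = v 0 := by
        have h := hfix 1
        rwa [(by decide : ((finRotate 3)⁻¹) 1 = 0)] at h
      have f2 : s 2 * v 2 = v 1 := by
        have h := hfix 2
        rwa [(by decide : ((finRotate 3)⁻¹) 2 = 1)] at h
      have hseq : s = (![v 2 * (v 0)⁻¹, v 0 * (v 1)⁻¹, v 1 * (v 2)⁻¹] : Fin 3 → ℝ) := by
        funext i
        obtain rfl|rfl|rfl := tri i <;> simp <;> field_simp <;>
          linarith [f0, f1, f2]
      rw [hseq]
      simp
    exact le_trans (Set.ncard_le_ncard hsub (Set.toFinite _)) (ncard3_le_four _ _ _)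

noncomputable def Phi (p : Equiv.Perm (Fin 3) × (Fin 3 → Bool)) : Matrix (Fin 3) (Fin 3) ℝ :=
  Q p.1 (fun j => if p.2 j then 1 else -1)

noncomputable def EG : Finset (Equiv.Perm (Fin 3) × (Fin 3 → Bool)) :=
  Finset.univ.filter fun p => Equiv.Perm.sign p.1 =
    (if p.2 0 then 1 else -1) * (if p.2 1 then 1 else -1) * (if p.2 2 then 1 else -1)

lemma card_EG : EG.card = 24 := by decide

lemma Gcube_eq : Gcube = ↑(EG.image Phi) := by
  ext A
  simp only [Finset.coe_image, Set.mem_image, Finset.mem_coe, EG, Finset.mem_filter,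
    Finset.mem_univ, true_and]
  constructor
  · intro hA
    have hdet : A.det = 1 := hA.1.2
    obtain ⟨σ, s, hs, rfl⟩ := exists_Q_of_mem_Gcube hA
    rw [det_Q] at hdet
    classical
    set b : Fin 3 → Bool := fun j => if s j = 1 then true else false with hbdef
    have hb : ∀ j, (if b j then (1:ℝ) else -1) = s j := by
      intro j
      rcases hs j with h | h
      · simp [hbdef, h]
      · simp [hbdef, h]
        exact fun hc => absurd hc (by norm_num)
    refine ⟨(σ, b), ?_, ?_⟩
    · show Equiv.Perm.sign σ = _
      have hb0 := hb 0; have hb1 := hb 1; have hb2 := hb 2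
      rcases Int.units_eq_one_or (Equiv.Perm.sign σ) with h | h <;> rw [h] at hdet ⊢ <;>
        push_cast at hdet <;>
        by_cases c0 : b 0 <;> by_cases c1 : b 1 <;> by_cases c2 : b 2 <;>
        simp only [c0, c1, c2, if_true, if_false] at hb0 hb1 hb2 ⊢ <;>
        rw [← hb0, ← hb1, ← hb2] at hdet <;> first | rfl | norm_num at hdet
    · show Q σ (fun j => if b j then (1:ℝ) else -1) = Q σ s
      have hfs : (fun j => if b j then (1:ℝ) else -1) = s := funext hb
      rw [hfs]
  · rintro ⟨⟨σ, b⟩, hcond, rfl⟩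
    apply Q_mem_Gcube
    · intro j
      by_cases c : b j <;> simp [c]
    · have hz : (Equiv.Perm.sign σ : ℤ) =
          (if b 0 then (1:ℤ) else -1) * (if b 1 then (1:ℤ) else -1) * (if b 2 then (1:ℤ) else -1) := by
        have := congrArg Units.val hcond
        simpa [apply_ite Units.val] using this
      rw [det_Q]
      have hcast : ((Equiv.Perm.sign σ : ℤ) : ℝ) =
          (if b 0 then (1:ℝ) else -1) * (if b 1 then (1:ℝ) else -1) * (if b 2 then (1:ℝ) else -1) := by
        rw [hz]
        push_cast [apply_ite (Int.cast : ℤ → ℝ)]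
        ring
      rw [show Equiv.Perm.sign (σ, b).1 = Equiv.Perm.sign σ from rfl, hcast]
      by_cases c0 : b 0 <;> by_cases c1 : b 1 <;> by_cases c2 : b 2 <;>
        norm_num [c0, c1, c2]

lemma Phi_injOn : Set.InjOn Phi ↑EG := by
  intro p _ q _ h
  have key : ∀ j, p.1 j = q.1 j ∧ (if p.2 j then (1:ℝ) else -1) = (if q.2 j then 1 else -1) := by
    intro j
    have e := congrFun (congrFun h (p.1 j)) j
    simp only [Phi, Q] at e
    by_cases hpq : p.1 j = q.1 j
    · refine ⟨hpq, ?_⟩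
      simpa [hpq] using e
    · exfalso
      simp [hpq] at e
      by_cases c : p.2 j <;> simp [c] at e
  have h1 : p.1 = q.1 := Equiv.ext fun j => (key j).1
  have h2 : p.2 = q.2 := by
    funext j
    have := (key j).2
    by_cases c : p.2 j <;> by_cases c' : q.2 j <;> simp [c, c'] at this ⊢ <;> norm_num at this
  exact Prod.ext h1 h2

lemma Gcube_ncard : Gcube.ncard = 24 := by
  rw [Gcube_eq, Set.ncard_coe_finset, Finset.card_image_of_injOn Phi_injOn, card_EG]

lemma act_one : act (1 : Matrix (Fin 3) (Fin 3) ℝ) = id :=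
  funext fun v => by simp [act, Matrix.one_mulVec]

lemma act_mul (A B : Matrix (Fin 3) (Fin 3) ℝ) : act (A * B) = act A ∘ act B :=
  funext fun v => by
    show WithLp.toLp 2 ((A * B).mulVec v) = WithLp.toLp 2 (A.mulVec (B.mulVec v))
    rw [Matrix.mulVec_mulVec]

lemma Gcube_one : (1 : Matrix (Fin 3) (Fin 3) ℝ) ∈ Gcube := by
  refine ⟨⟨by simp, by simp⟩, ?_⟩
  rw [act_one, Set.image_id]

lemma Gcube_mul {A B : Matrix (Fin 3) (Fin 3) ℝ} (hA : A ∈ Gcube) (hB : B ∈ Gcube) :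
    A * B ∈ Gcube := by
  obtain ⟨⟨hA1, hA2⟩, hA3⟩ := hA; obtain ⟨⟨hB1, hB2⟩, hB3⟩ := hB
  refine ⟨⟨?_, ?_⟩, ?_⟩
  · rw [Matrix.transpose_mul, mul_assoc, ← mul_assoc Aᵀ A B, hA1, one_mul, hB1]
  · rw [Matrix.det_mul, hA2, hB2, one_mul]
  · rw [act_mul, Set.image_comp, hB3, hA3]

lemma Gcube_transpose {A : Matrix (Fin 3) (Fin 3) ℝ} (hA : A ∈ Gcube) : Aᵀ ∈ Gcube := by
  obtain ⟨⟨h1, h2⟩, h3⟩ := hA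
  refine ⟨⟨by rw [Matrix.transpose_transpose]; exact mul_eq_one_comm.mp h1, by rwa [Matrix.det_transpose]⟩, ?_⟩
  conv_lhs => rw [← h3]
  rw [← Set.image_comp, ← act_mul, h1, act_one, Set.image_id]

noncomputable instance actInst : MulAction (Matrix (Fin 3) (Fin 3) ℝ) (EuclideanSpace ℝ (Fin 3)) where
  smul A v := WithLp.toLp 2 (A.mulVec v)
  one_smul v := by show WithLp.toLp 2 (Matrix.mulVec 1 v) = v; rw [Matrix.one_mulVec]
  mul_smul A B v := by
    show WithLp.toLp 2 ((A * B).mulVec v) = WithLp.toLp 2 (A.mulVec (B.mulVec v))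
    rw [Matrix.mulVec_mulVec]

noncomputable def toUnit (A : Matrix (Fin 3) (Fin 3) ℝ) (hA : A ∈ Gcube) :
    (Matrix (Fin 3) (Fin 3) ℝ)ˣ :=
  ⟨A, Aᵀ, mul_eq_one_comm.mp hA.1.1, hA.1.1⟩

noncomputable def Hgrp : Subgroup (Matrix (Fin 3) (Fin 3) ℝ)ˣ where
  carrier := {u | (u : Matrix (Fin 3) (Fin 3) ℝ) ∈ Gcube}
  one_mem' := Gcube_one
  mul_mem' := fun {a b} ha hb => by
    show ((a * b : _ˣ) : Matrix (Fin 3) (Fin 3) ℝ) ∈ Gcube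
    rw [Units.val_mul]
    exact Gcube_mul ha hb
  inv_mem' := fun {u} hu => by
    have h1 : (↑u : Matrix (Fin 3) (Fin 3) ℝ)ᵀ * (↑u : Matrix (Fin 3) (Fin 3) ℝ) = 1 := hu.1.1
    have hc : ((u⁻¹ : _ˣ) : Matrix (Fin 3) (Fin 3) ℝ) = (↑u : Matrix (Fin 3) (Fin 3) ℝ)ᵀ := by
      have h2 := congrArg (fun X => (↑u : Matrix (Fin 3) (Fin 3) ℝ)ᵀ * X) (Units.mul_inv u)
      simpa only [← mul_assoc, h1, one_mul, mul_one] using h2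
    show ((u⁻¹ : _ˣ) : Matrix (Fin 3) (Fin 3) ℝ) ∈ Gcube
    rw [hc]
    exact Gcube_transpose hu

lemma orbit_eq (v : EuclideanSpace ℝ (Fin 3)) : MulAction.orbit Hgrp v = orb Gcube v := by
  ext x
  constructor
  · rintro ⟨⟨u, hu⟩, rfl⟩
    exact ⟨↑u, hu, rfl⟩
  · rintro ⟨A, hA, rfl⟩
    exact ⟨⟨toUnit A hA, hA⟩, rfl⟩

noncomputable def eH : Hgrp ≃ ↥Gcube where
  toFun := fun u => ⟨(((u : Hgrp) : (Matrix (Fin 3) (Fin 3) ℝ)ˣ) : Matrix (Fin 3) (Fin 3) ℝ), u.2⟩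
  invFun := fun a => ⟨toUnit a.1 a.2, a.2⟩
  left_inv := fun u => Subtype.ext (Units.ext rfl)
  right_inv := fun a => rfl

lemma card_H : Nat.card Hgrp = 24 := by
  rw [Nat.card_congr eH, Nat.card_coe_set_eq, Gcube_ncard]

noncomputable def eStab (v : EuclideanSpace ℝ (Fin 3)) :
    MulAction.stabilizer Hgrp v ≃ ↥{A : Matrix (Fin 3) (Fin 3) ℝ | A ∈ Gcube ∧ A.mulVec v = v} where
  toFun := fun u => ⟨((u : Hgrp) : (Matrix (Fin 3) (Fin 3) ℝ)ˣ), ⟨(u : Hgrp).2, by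
    have h := u.2
    rw [MulAction.mem_stabilizer_iff] at h
    exact congrArg WithLp.ofLp h⟩⟩
  invFun := fun a => ⟨⟨toUnit a.1 a.2.1, a.2.1⟩, by
    rw [MulAction.mem_stabilizer_iff]
    exact congrArg (WithLp.toLp 2) a.2.2⟩
  left_inv := fun u => Subtype.ext (Subtype.ext (Units.ext rfl))
  right_inv := fun a => rfl

/-- Every orbit of a nonzero vector under the octahedral rotation group has
cardinality 6, 8, 12, or 24. -/
theorem octahedral_orbit_card (v : EuclideanSpace ℝ (Fin 3)) (hv : v ≠ 0) :
    (orb Gcube v).ncard = 6 ∨ (orb Gcube v).ncard = 8 ∨ (orb Gcube v).ncard = 12 ∨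
      (orb Gcube v).ncard = 24 := by
  have key := Nat.card_congr (MulAction.orbitProdStabilizerEquivGroup Hgrp v)
  rw [Nat.card_prod, card_H] at key
  have horb : Nat.card (MulAction.orbit Hgrp v) = (orb Gcube v).ncard := by
    rw [orbit_eq, Nat.card_coe_set_eq]
  have hstab : Nat.card (MulAction.stabilizer Hgrp v) =
      {A : Matrix (Fin 3) (Fin 3) ℝ | A ∈ Gcube ∧ A.mulVec v = v}.ncard := by
    rw [Nat.card_congr (eStab v), Nat.card_coe_set_eq]
  replace key : (orb Gcube v).ncard *
      {A : Matrix (Fin 3) (Fin 3) ℝ | A ∈ Gcube ∧ A.mulVec v = v}.ncard = 24 := by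
    rw [← horb, ← hstab]; exact key
  have hle := Sv_ncard_le v hv
  set st := {A : Matrix (Fin 3) (Fin 3) ℝ | A ∈ Gcube ∧ A.mulVec v = v}.ncard with hst
  interval_cases st <;> omega
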